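/- Let H ∈ (0,1). Then ∫_0^1 ∫_0^1 [|u−s+x|^{2H} − |u−s|^{2H}] ds du = x² + o(x²) as x → 0⁺. -/

import Mathlib

open MeasureTheory Filter Set


lemma absA (q : ℝ) (hq : 0 < q) (t : ℝ) :
    HasDerivAt (fun t : ℝ => t * |t| ^ q) ((q + 1) * |t| ^ q) t := by
  rcases lt_trichotomy t 0 with ht | ht | ht
  · have h1 : HasDerivAt (fun x : ℝ => -((-x) ^ (q + 1)))
        (-(((q + 1) * (-t) ^ (q + 1 - 1)) * (-1))) t := by
      exact ((Real.hasDerivAt_rpow_const (p := q+1) (Or.inl (neg_ne_zero.mpr ht.ne))).comp t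
        (hasDerivAt_neg t)).neg
    have h2 : HasDerivAt (fun x : ℝ => -((-x) ^ (q + 1))) ((q + 1) * |t| ^ q) t := by
      convert h1 using 1
      rw [abs_of_neg ht, show q + 1 - 1 = q by ring]; ring
    apply h2.congr_of_eventuallyEq
    filter_upwards [eventually_lt_nhds ht] with x hx
    rw [abs_of_neg hx, show (q:ℝ) + 1 = q + 1 by ring, Real.rpow_add (by linarith) q 1,
      Real.rpow_one]
    ring
  · subst ht
    have key : Tendsto (fun x : ℝ => |x| ^ q) (nhdsWithin 0 {(0:ℝ)}ᶜ) (nhds 0) := by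
      have : Tendsto (fun x : ℝ => |x| ^ q) (nhds 0) (nhds (|(0:ℝ)| ^ q)) :=
        ((Real.continuous_rpow_const hq.le).comp continuous_abs).tendsto 0
      simpa [Real.zero_rpow hq.ne'] using this.mono_left nhdsWithin_le_nhds
    have : HasDerivAt (fun t : ℝ => t * |t| ^ q) 0 0 := by
      rw [hasDerivAt_iff_tendsto_slope]
      apply key.congr'
      filter_upwards [self_mem_nhdsWithin] with x hx
      simp only [mem_compl_iff, mem_singleton_iff] at hx
      simp only [slope_def_field, zero_mul, sub_zero]
      rw [mul_div_cancel_left₀ _ hx]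
    simpa [Real.zero_rpow hq.ne'] using this
  · have h1 : HasDerivAt (fun x : ℝ => x ^ (q + 1)) ((q + 1) * t ^ (q + 1 - 1)) t :=
      Real.hasDerivAt_rpow_const (Or.inl ht.ne')
    have h2 : HasDerivAt (fun x : ℝ => x ^ (q + 1)) ((q + 1) * |t| ^ q) t := by
      convert h1 using 2
      rw [abs_of_pos ht, show q + 1 - 1 = q by ring]
    apply h2.congr_of_eventuallyEq
    filter_upwards [eventually_gt_nhds ht] with x hx
    rw [abs_of_pos hx, Real.rpow_add hx q 1, Real.rpow_one]
    ring

lemma absB (q : ℝ) (hq : 0 < q) (t : ℝ) :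
    HasDerivAt (fun t : ℝ => |t| ^ (q + 2)) ((q + 2) * (t * |t| ^ q)) t := by
  rcases lt_trichotomy t 0 with ht | ht | ht
  · have h1 : HasDerivAt (fun x : ℝ => (-x) ^ (q + 2))
        (((q + 2) * (-t) ^ (q + 2 - 1)) * (-1)) t :=
      (Real.hasDerivAt_rpow_const (p := q+2) (Or.inl (neg_ne_zero.mpr ht.ne))).comp t (hasDerivAt_neg t)
    have h2 : HasDerivAt (fun x : ℝ => (-x) ^ (q + 2)) ((q + 2) * (t * |t| ^ q)) t := by
      convert h1 using 1
      rw [abs_of_neg ht, show q + 2 - 1 = q + 1 by ring, Real.rpow_add (by linarith) q 1,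
        Real.rpow_one]
      ring
    apply h2.congr_of_eventuallyEq
    filter_upwards [eventually_lt_nhds ht] with x hx
    rw [abs_of_neg hx]
  · subst ht
    have key : Tendsto (fun x : ℝ => |x| ^ (q + 1)) (nhdsWithin 0 {(0:ℝ)}ᶜ) (nhds 0) := by
      have : Tendsto (fun x : ℝ => |x| ^ (q + 1)) (nhds 0) (nhds (|(0:ℝ)| ^ (q + 1))) :=
        ((Real.continuous_rpow_const (by linarith)).comp continuous_abs).tendsto 0
      simpa [Real.zero_rpow (by linarith : q + 1 ≠ 0)] using this.mono_left nhdsWithin_le_nhds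
    have : HasDerivAt (fun t : ℝ => |t| ^ (q + 2)) 0 0 := by
      rw [hasDerivAt_iff_tendsto_slope]
      apply squeeze_zero_norm' _ key
      filter_upwards [self_mem_nhdsWithin] with x hx
      simp only [mem_compl_iff, mem_singleton_iff] at hx
      have hax : (0:ℝ) < |x| := abs_pos.mpr hx
      rw [slope_def_field]
      have : |x| ^ (q + 2) = |x| ^ (q + 1) * |x| := by
        rw [show q + 2 = (q + 1) + 1 by ring, Real.rpow_add hax, Real.rpow_one]
      simp only [abs_zero, Real.zero_rpow (by linarith : q + (2:ℝ) ≠ 0), sub_zero]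
      rw [norm_div, Real.norm_eq_abs, Real.norm_eq_abs,
        abs_of_nonneg (Real.rpow_nonneg (abs_nonneg x) _), this, mul_div_assoc,
        div_self hax.ne', mul_one]
    simpa using this
  · have h1 : HasDerivAt (fun x : ℝ => x ^ (q + 2)) ((q + 2) * t ^ (q + 2 - 1)) t :=
      Real.hasDerivAt_rpow_const (Or.inl ht.ne')
    have h2 : HasDerivAt (fun x : ℝ => x ^ (q + 2)) ((q + 2) * (t * |t| ^ q)) t := by
      convert h1 using 1
      rw [abs_of_pos ht, show q + 2 - 1 = q + 1 by ring, Real.rpow_add ht q 1, Real.rpow_one]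
      ring
    apply h2.congr_of_eventuallyEq
    filter_upwards [eventually_gt_nhds ht] with x hx
    rw [abs_of_pos hx]


noncomputable def Gfun (p : ℝ) : ℝ → ℝ := fun t => t * |t| ^ p / (p + 1)
noncomputable def Pfun (p : ℝ) : ℝ → ℝ := fun t => |t| ^ (p + 2) / ((p + 1) * (p + 2))

lemma contAbs (p : ℝ) (hp : 0 < p) : Continuous (fun t : ℝ => |t| ^ p) :=
  (Real.continuous_rpow_const hp.le).comp continuous_abs

lemma contG (p : ℝ) (hp : 0 < p) : Continuous (Gfun p) :=
  (continuous_id.mul (contAbs p hp)).div_const _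

lemma hG (p : ℝ) (hp : 0 < p) (t : ℝ) : HasDerivAt (Gfun p) (|t| ^ p) t := by
  have h := (absA p hp t).div_const (p + 1)
  have hp1 : p + 1 ≠ 0 := by positivity
  unfold Gfun
  refine h.congr_deriv ?_
  rw [mul_div_cancel_left₀ _ hp1]

lemma hP (p : ℝ) (hp : 0 < p) (t : ℝ) : HasDerivAt (Pfun p) (Gfun p t) t := by
  have h := (absB p hp t).div_const ((p + 1) * (p + 2))
  have hp1 : p + 1 ≠ 0 := by positivity
  have hp2 : p + 2 ≠ 0 := by positivity
  unfold Pfun Gfun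
  refine h.congr_deriv ?_
  rw [mul_comm (p + 1), mul_div_mul_left _ _ hp2]

lemma innerInt (p : ℝ) (hp : 0 < p) (c : ℝ) :
    ∫ s in (0:ℝ)..1, |c - s| ^ p = Gfun p c - Gfun p (c - 1) := by
  rw [intervalIntegral.integral_comp_sub_left (fun t : ℝ => |t| ^ p) c, sub_zero]
  exact intervalIntegral.integral_eq_sub_of_hasDerivAt (fun t _ => hG p hp t)
    ((contAbs p hp).intervalIntegrable _ _)

lemma outerInt (p : ℝ) (hp : 0 < p) (d : ℝ) :
    ∫ u in (0:ℝ)..1, Gfun p (u + d) = Pfun p (1 + d) - Pfun p d := by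
  rw [intervalIntegral.integral_comp_add_right (Gfun p) d, zero_add]
  exact intervalIntegral.integral_eq_sub_of_hasDerivAt (fun t _ => hP p hp t)
    ((contG p hp).intervalIntegrable _ _)

lemma doubleInt (p : ℝ) (hp : 0 < p) (x : ℝ) :
    (∫ u in (0:ℝ)..1, ∫ s in (0:ℝ)..1, (|u - s + x| ^ p - |u - s| ^ p))
      = ((Pfun p (1 + x) - Pfun p x) - (Pfun p x - Pfun p (x - 1)))
        - ((Pfun p 1 - Pfun p 0) - (Pfun p 0 - Pfun p (-1))) := by
  have hinner : ∀ u : ℝ, (∫ s in (0:ℝ)..1, (|u - s + x| ^ p - |u - s| ^ p))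
      = (Gfun p (u + x) - Gfun p (u + x - 1)) - (Gfun p u - Gfun p (u - 1)) := by
    intro u
    have i1 : IntervalIntegrable (fun s : ℝ => |u - s + x| ^ p) volume 0 1 :=
      ((contAbs p hp).comp (by continuity)).intervalIntegrable _ _
    have i2 : IntervalIntegrable (fun s : ℝ => |u - s| ^ p) volume 0 1 :=
      ((contAbs p hp).comp (by continuity)).intervalIntegrable _ _
    rw [intervalIntegral.integral_sub i1 i2]
    have e1 : (∫ s in (0:ℝ)..1, |u - s + x| ^ p) = ∫ s in (0:ℝ)..1, |(u + x) - s| ^ p := by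
      apply intervalIntegral.integral_congr
      intro s _
      congr 2
      ring
    rw [e1, innerInt p hp (u + x), innerInt p hp u, show u + x - 1 = u + x - 1 by ring]
  rw [intervalIntegral.integral_congr (g := fun u =>
      (Gfun p (u + x) - Gfun p (u + x - 1)) - (Gfun p u - Gfun p (u - 1)))
      (fun u _ => hinner u)]
  have c1 : IntervalIntegrable (fun u : ℝ => Gfun p (u + x)) volume 0 1 :=
    ((contG p hp).comp (by continuity)).intervalIntegrable _ _
  have c2 : IntervalIntegrable (fun u : ℝ => Gfun p (u + x - 1)) volume 0 1 :=
    ((contG p hp).comp (by continuity)).intervalIntegrable _ _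
  have c3 : IntervalIntegrable (fun u : ℝ => Gfun p u) volume 0 1 :=
    (contG p hp).intervalIntegrable _ _
  have c4 : IntervalIntegrable (fun u : ℝ => Gfun p (u - 1)) volume 0 1 :=
    ((contG p hp).comp (by continuity)).intervalIntegrable _ _
  rw [intervalIntegral.integral_sub (c1.sub c2) (c3.sub c4),
    intervalIntegral.integral_sub c1 c2, intervalIntegral.integral_sub c3 c4]
  have o1 := outerInt p hp x
  have o2 : (∫ u in (0:ℝ)..1, Gfun p (u + x - 1)) = Pfun p (1 + (x - 1)) - Pfun p (x - 1) := by
    rw [← outerInt p hp (x - 1)]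
    apply intervalIntegral.integral_congr
    intro u _; congr 1; ring
  have o3 : (∫ u in (0:ℝ)..1, Gfun p u) = Pfun p (1 + 0) - Pfun p 0 := by
    rw [← outerInt p hp 0]
    apply intervalIntegral.integral_congr
    intro u _; congr 1; ring
  have o4 : (∫ u in (0:ℝ)..1, Gfun p (u - 1)) = Pfun p (1 + (-1)) - Pfun p (-1) := by
    rw [← outerInt p hp (-1)]
    apply intervalIntegral.integral_congr
    intro u _; congr 1
  rw [o1, o2, o3, o4]
  norm_num


lemma lhop (p : ℝ) (hp : 0 < p) (c : ℝ) (hcdef : c = (p+1)*(p+2)) :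
    Tendsto (fun x : ℝ => ((1+x)^(p+2) + (1-x)^(p+2) - 2 - c*x^2) / (c*x^2))
      (nhdsWithin 0 (Set.Ioi 0)) (nhds 0) := by
  have hc : (0:ℝ) < c := by rw [hcdef]; positivity
  set φ : ℝ → ℝ := fun x => (1+x)^(p+2) + (1-x)^(p+2) - 2 - c*x^2 with hφ
  set φ' : ℝ → ℝ := fun x => (p+2)*(1+x)^(p+1) - (p+2)*(1-x)^(p+1) - c*(2*x) with hφ'
  set φ'' : ℝ → ℝ := fun x => (p+2)*(p+1)*(1+x)^p + (p+2)*(p+1)*(1-x)^p - 2*c with hφ''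
  have d1 : ∀ x ∈ Ioo (0:ℝ) (1/2), HasDerivAt φ (φ' x) x := by
    intro x hx
    have h1x : (0:ℝ) < 1 + x := by linarith [hx.1]
    have h2x : (0:ℝ) < 1 - x := by have := hx.2; norm_num at this ⊢; linarith
    have e1 : HasDerivAt (fun y : ℝ => (1+y)^(p+2)) (1 * (p+2) * (1+x)^(p+2-1)) x :=
      HasDerivAt.rpow_const ((hasDerivAt_id x).const_add 1) (Or.inl h1x.ne')
    have e2 : HasDerivAt (fun y : ℝ => (1-y)^(p+2)) ((-1) * (p+2) * (1-x)^(p+2-1)) x :=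
      HasDerivAt.rpow_const ((hasDerivAt_id x).const_sub 1) (Or.inl h2x.ne')
    have e3 : HasDerivAt (fun y : ℝ => c*y^2) (c*(2*x)) x := by
      have := (hasDerivAt_pow 2 x).const_mul c
      exact this.congr_deriv (by norm_num)
    have := ((e1.add e2).sub (hasDerivAt_const x (2:ℝ))).sub e3
    refine this.congr_deriv ?_
    simp only [hφ']
    rw [show p+2-1 = p+1 by ring]; ring
  have d2 : ∀ x ∈ Ioo (0:ℝ) (1/2), HasDerivAt φ' (φ'' x) x := by
    intro x hx
    have h1x : (0:ℝ) < 1 + x := by linarith [hx.1]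
    have h2x : (0:ℝ) < 1 - x := by have := hx.2; norm_num at this ⊢; linarith
    have e1 : HasDerivAt (fun y : ℝ => (p+2)*(1+y)^(p+1)) ((1 * (p+1) * (1+x)^(p+1-1))*(p+2)) x :=
      (HasDerivAt.rpow_const ((hasDerivAt_id x).const_add 1) (Or.inl h1x.ne')).const_mul (p+2)
        |>.congr_deriv (by simp only [id_eq]; ring)
    have e2 : HasDerivAt (fun y : ℝ => (p+2)*(1-y)^(p+1)) (((-1) * (p+1) * (1-x)^(p+1-1))*(p+2)) x :=
      (HasDerivAt.rpow_const ((hasDerivAt_id x).const_sub 1) (Or.inl h2x.ne')).const_mul (p+2)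
        |>.congr_deriv (by simp only [id_eq]; ring)
    have e3 : HasDerivAt (fun y : ℝ => c*(2*y)) (c*2) x := by
      simpa using ((hasDerivAt_id x).const_mul (2:ℝ)).const_mul c
    have := (e1.sub e2).sub e3
    refine this.congr_deriv ?_
    simp only [hφ'']
    rw [show p+1-1 = p by ring]; ring
  have dg1 : ∀ x ∈ Ioo (0:ℝ) (1/2), HasDerivAt (fun y : ℝ => c*y^2) (c*(2*x)) x := by
    intro x _
    have := (hasDerivAt_pow 2 x).const_mul c
    exact this.congr_deriv (by norm_num)
  have dg2 : ∀ x ∈ Ioo (0:ℝ) (1/2), HasDerivAt (fun y : ℝ => c*(2*y)) (c*2) x := by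
    intro x _
    simpa using ((hasDerivAt_id x).const_mul (2:ℝ)).const_mul c
  have contrp : ∀ q : ℝ, 0 ≤ q → Continuous (fun y : ℝ => (1+y)^q) := fun q hq =>
    (Real.continuous_rpow_const hq).comp (continuous_const.add continuous_id)
  have contrm : ∀ q : ℝ, 0 ≤ q → Continuous (fun y : ℝ => (1-y)^q) := fun q hq =>
    (Real.continuous_rpow_const hq).comp (continuous_const.sub continuous_id)
  have hdiv2 : Tendsto (fun x => φ'' x / (c*2)) (nhdsWithin 0 (Set.Ioi 0)) (nhds 0) := by
    have cont : Continuous (fun x => φ'' x / (c*2)) := by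
      rw [hφ'']
      apply Continuous.div_const
      exact (((continuous_const.mul (contrp p hp.le)).add (continuous_const.mul (contrm p hp.le))).sub
        continuous_const)
    have := (cont.tendsto 0).mono_left (nhdsWithin_le_nhds (s := Set.Ioi (0:ℝ)))
    convert this using 2
    rw [hφ'']
    simp [Real.one_rpow]
    rw [hcdef]; ring
  have hfa' : Tendsto φ' (nhdsWithin 0 (Set.Ioi 0)) (nhds 0) := by
    have cont : Continuous φ' := by
      rw [hφ']
      exact ((continuous_const.mul (contrp (p+1) (by linarith))).sub
        (continuous_const.mul (contrm (p+1) (by linarith)))).sub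
        (continuous_const.mul (continuous_const.mul continuous_id))
    have := (cont.tendsto 0).mono_left (nhdsWithin_le_nhds (s := Set.Ioi (0:ℝ)))
    convert this using 2
    rw [hφ']
    simp [Real.one_rpow]
  have hga' : Tendsto (fun y : ℝ => c*(2*y)) (nhdsWithin 0 (Set.Ioi 0)) (nhds 0) := by
    have : Continuous (fun y : ℝ => c*(2*y)) :=
      continuous_const.mul (continuous_const.mul continuous_id)
    have := (this.tendsto 0).mono_left (nhdsWithin_le_nhds (s := Set.Ioi (0:ℝ)))
    simpa using this
  have L2 : Tendsto (fun x => φ' x / (c*(2*x))) (nhdsWithin 0 (Set.Ioi 0)) (nhds 0) :=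
    HasDerivAt.lhopital_zero_right_on_Ioo (by norm_num : (0:ℝ) < 1/2) d2 dg2
      (fun x _ => by positivity) hfa' hga' hdiv2
  have hfa : Tendsto φ (nhdsWithin 0 (Set.Ioi 0)) (nhds 0) := by
    have cont : Continuous φ := by
      rw [hφ]
      exact (((contrp (p+2) (by linarith)).add (contrm (p+2) (by linarith))).sub
        continuous_const).sub (continuous_const.mul (continuous_pow 2))
    have := (cont.tendsto 0).mono_left (nhdsWithin_le_nhds (s := Set.Ioi (0:ℝ)))
    convert this using 2
    rw [hφ]
    simp [Real.one_rpow]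
    norm_num
  have hga : Tendsto (fun y : ℝ => c*y^2) (nhdsWithin 0 (Set.Ioi 0)) (nhds 0) := by
    have : Continuous (fun y : ℝ => c*y^2) := continuous_const.mul (continuous_pow 2)
    have := (this.tendsto 0).mono_left (nhdsWithin_le_nhds (s := Set.Ioi (0:ℝ)))
    simpa using this
  exact HasDerivAt.lhopital_zero_right_on_Ioo (by norm_num : (0:ℝ) < 1/2) d1 dg1
    (fun x hx => by have := hx.1; positivity) hfa hga L2


theorem stmt10 (H : ℝ) (hH : H ∈ Set.Ioo (0:ℝ) 1) :
    Tendsto (fun x : ℝ =>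
      ((∫ u in (0:ℝ)..1, ∫ s in (0:ℝ)..1, (|u - s + x| ^ (2*H) - |u - s| ^ (2*H)))
        - x ^ 2) / x ^ 2)
      (nhdsWithin 0 (Set.Ioi 0)) (nhds 0) := by
  set p : ℝ := 2*H with hpdef
  have hp : 0 < p := by simp [hpdef]; linarith [hH.1]
  set c : ℝ := (p+1)*(p+2) with hcdef
  have hc : (0:ℝ) < c := by rw [hcdef]; positivity
  have T1 := lhop p hp c hcdef
  have T2 : Tendsto (fun x : ℝ => 2/c * x ^ p) (nhdsWithin 0 (Set.Ioi 0)) (nhds 0) := by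
    have h0 : Tendsto (fun x : ℝ => x ^ p) (nhds 0) (nhds ((0:ℝ) ^ p)) :=
      (Real.continuousAt_rpow_const 0 p (Or.inr hp.le)).tendsto
    have := ((h0.mono_left (nhdsWithin_le_nhds (s := Set.Ioi (0:ℝ)))).const_mul (2/c))
    simpa [Real.zero_rpow hp.ne'] using this
  have main := T1.sub T2
  rw [show (0:ℝ) - 0 = 0 by ring] at main
  apply main.congr'
  filter_upwards [Ioo_mem_nhdsGT (show (0:ℝ) < 1 by norm_num)] with x hx
  have hx0 : (0:ℝ) < x := hx.1
  have hx1 : x < 1 := hx.2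
  rw [doubleInt p hp x]
  have e0 : Pfun p 0 = 0 := by
    unfold Pfun
    rw [abs_zero, Real.zero_rpow (by positivity : p + 2 ≠ 0), zero_div]
  have e1 : Pfun p 1 = 1/c := by
    unfold Pfun
    rw [abs_one, Real.one_rpow, hcdef]
  have em1 : Pfun p (-1) = 1/c := by
    unfold Pfun
    rw [abs_neg, abs_one, Real.one_rpow, hcdef]
  have e2 : Pfun p (1 + x) = (1+x) ^ (p+2) / c := by
    unfold Pfun
    rw [abs_of_pos (by linarith : (0:ℝ) < 1 + x), hcdef]
  have e3 : Pfun p x = x ^ (p+2) / c := by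
    unfold Pfun
    rw [abs_of_pos hx0, hcdef]
  have e4 : Pfun p (x - 1) = (1-x) ^ (p+2) / c := by
    unfold Pfun
    rw [show |x - 1| = 1 - x by rw [abs_of_neg (by linarith : x - 1 < 0)]; ring, hcdef]
  rw [e0, e1, em1, e2, e3, e4]
  have hxp : x ^ (p+2) = x ^ p * x ^ 2 := by
    rw [Real.rpow_add hx0, show (2:ℝ) = ((2:ℕ):ℝ) by norm_num, Real.rpow_natCast]
  rw [hxp]
  field_simp
  ring
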